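/- Let D ≥ 1 and i ≥ 1 be integers. For m ∈ ℕ and a function f : (Fin m → Fin D) → ℝ, define its antisymmetrization by (Alt f)(μ) = (1/m!)·Σ_{p ∈ Perm(Fin m)} sign(p)·f(μ∘p). Let T : Fin D → ((Fin (2i) → Fin D) → ℝ) be such that each T(ν) is antisymmetric: T(ν)(μ∘p) = sign(p)·T(ν)(μ) for every permutation p of Fin (2i) and every μ. Define B : (Fin (2i+1) → Fin D) → ℝ by B(μ) = T(μ(0))(μ(1), …, μ(2i)). Then for every μ : Fin (2i+1) → Fin D, (2i+1)·(Alt B)(μ) = B(μ) − 2i·(Alt C_{μ(0)})(μ(1), …, μ(2i)), where C_{μ(0)} : (Fin (2i) → Fin D) → ℝ is defined by C_{μ(0)}(ν) = T(ν(0))(μ(0), ν(1), …, ν(2i−1)). -/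

import Mathlib

/-- Antisymmetrization of a function of `m` indices:
`(Alt f)(μ) = (1/m!) Σ_{p ∈ Perm(Fin m)} sign(p) f(μ ∘ p)`. -/
noncomputable def alt (m D : ℕ) (f : (Fin m → Fin D) → ℝ)
    (μ : Fin m → Fin D) : ℝ :=
  (1 / (Nat.factorial m) : ℝ)
    * ∑ p : Equiv.Perm (Fin m), ((Equiv.Perm.sign p : ℤ) : ℝ) * f (μ ∘ p)

/-- Summing a function of `r z` over all permutations `r`. -/
lemma sum_perm_apply {n : ℕ} (hn : n ≠ 0) (G : Fin n → ℝ) (z : Fin n) :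
    (n : ℝ) * ∑ r : Equiv.Perm (Fin n), G (r z)
      = (Nat.factorial n : ℝ) * ∑ k, G k := by
  obtain ⟨m, rfl⟩ := Nat.exists_eq_succ_of_ne_zero hn
  have h0 : ∑ r : Equiv.Perm (Fin (m + 1)), G (r z)
      = ∑ r : Equiv.Perm (Fin (m + 1)), G (r 0) := by
    refine Fintype.sum_equiv (Equiv.mulRight (Equiv.swap 0 z)) _ _ ?_
    intro r
    simp [Equiv.Perm.mul_apply]
  rw [h0, ← Equiv.sum_comp Equiv.Perm.decomposeFin.symm
    (fun r : Equiv.Perm (Fin (m + 1)) => G (r 0)), Fintype.sum_prod_type]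
  simp only [Equiv.Perm.decomposeFin_symm_apply_zero]
  rw [Finset.sum_congr rfl (fun j _ => Finset.sum_const (G j))]
  simp only [Finset.card_univ, Fintype.card_perm, Fintype.card_fin, nsmul_eq_mul]
  rw [← Finset.mul_sum, Nat.factorial_succ]
  push_cast
  ring

/-- **The index antisymmetrization identity**
`(2i+1)·∂^{[μ₀}Φ^{μ₁⋯μ₂ᵢ]} = ∂^{μ₀}Φ^{μ₁⋯μ₂ᵢ} − 2i·∂^{[μ₁}Φ^{|μ₀|μ₂⋯μ₂ᵢ]}`
for a totally antisymmetric tensor `Φ` with `2i` indices, here abstracted as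
a family `T` with `T ν` the antisymmetric function of the `2i` tensor
indices (`ν` the derivative index), `B(μ) = T(μ₀)(μ₁,…,μ₂ᵢ)` and
`C_{μ₀}(ν) = T(ν₀)(μ₀,ν₁,…,ν_{2i−1})`. -/
theorem antisymmetrization_identity
    (D i : ℕ) (hD : 1 ≤ D) (hi : 1 ≤ i)
    (T : Fin D → ((Fin (2 * i) → Fin D) → ℝ))
    (hT : ∀ (ν : Fin D) (p : Equiv.Perm (Fin (2 * i))) (μ : Fin (2 * i) → Fin D),
      T ν (μ ∘ p) = ((Equiv.Perm.sign p : ℤ) : ℝ) * T ν μ) :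
    ∀ μ : Fin (2 * i + 1) → Fin D,
      (2 * i + 1 : ℝ)
          * alt (2 * i + 1) D (fun ν => T (ν 0) (fun l => ν l.succ)) μ
        = T (μ 0) (fun l => μ l.succ)
          - (2 * i : ℝ)
              * alt (2 * i) D
                  (fun ν => T (ν ⟨0, by omega⟩)
                    (Function.update ν (⟨0, by omega⟩ : Fin (2 * i)) (μ 0)))
                  (fun l => μ l.succ) := by
  intro μ
  have hn0 : (2 * i : ℕ) ≠ 0 := by omega
  have hz : (0 : ℕ) < 2 * i := by omega
  set z : Fin (2 * i) := ⟨0, hz⟩ with hzdef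
  -- key consequence of antisymmetry
  have keyT : ∀ (ν : Fin D) (q : Equiv.Perm (Fin (2 * i))) (f : Fin (2 * i) → Fin D),
      ((Equiv.Perm.sign q : ℤ) : ℝ) * T ν (f ∘ q) = T ν f := by
    intro ν q f
    rw [hT, ← mul_assoc, ← Int.cast_mul, ← Units.val_mul, Int.units_mul_self,
      Units.val_one, Int.cast_one, one_mul]
  -- the auxiliary family of arguments
  set h : Fin (2 * i) → Fin (2 * i) → Fin D :=
    fun k m => if m = k then μ 0 else μ m.succ with hdef
  -- LHS sum computation
  have hsum : ∑ p : Equiv.Perm (Fin (2 * i + 1)),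
      ((Equiv.Perm.sign p : ℤ) : ℝ) * T ((μ ∘ p) 0) (fun l => (μ ∘ p) l.succ)
      = (Nat.factorial (2 * i) : ℝ)
        * (T (μ 0) (fun l => μ l.succ) - ∑ k : Fin (2 * i), T (μ k.succ) (h k)) := by
    rw [← Equiv.sum_comp Equiv.Perm.decomposeFin.symm
      (fun p : Equiv.Perm (Fin (2 * i + 1)) =>
        ((Equiv.Perm.sign p : ℤ) : ℝ) * T ((μ ∘ p) 0) (fun l => (μ ∘ p) l.succ)),
      Fintype.sum_prod_type, Fin.sum_univ_succ]
    have t0 : ∀ q : Equiv.Perm (Fin (2 * i)),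
        ((Equiv.Perm.sign (Equiv.Perm.decomposeFin.symm (0, q)) : ℤ) : ℝ)
          * T ((μ ∘ Equiv.Perm.decomposeFin.symm (0, q)) 0)
            (fun l => (μ ∘ Equiv.Perm.decomposeFin.symm (0, q)) l.succ)
        = T (μ 0) (fun l => μ l.succ) := by
      intro q
      have harg : (fun l => (μ ∘ Equiv.Perm.decomposeFin.symm (0, q)) l.succ)
          = (fun l => μ l.succ) ∘ q := by
        funext l
        simp [Equiv.Perm.decomposeFin_symm_apply_succ]
      rw [harg]
      simp only [Function.comp_apply, Equiv.Perm.decomposeFin_symm_apply_zero,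
        Equiv.Perm.decomposeFin.symm_sign, if_pos, ite_true, one_mul,
        Units.val_mul, Int.cast_mul, Units.val_one, Int.cast_one]
      exact keyT _ q _
    have tk : ∀ (k : Fin (2 * i)) (q : Equiv.Perm (Fin (2 * i))),
        ((Equiv.Perm.sign (Equiv.Perm.decomposeFin.symm (k.succ, q)) : ℤ) : ℝ)
          * T ((μ ∘ Equiv.Perm.decomposeFin.symm (k.succ, q)) 0)
            (fun l => (μ ∘ Equiv.Perm.decomposeFin.symm (k.succ, q)) l.succ)
        = -(T (μ k.succ) (h k)) := by
      intro k q
      have harg : (fun l => (μ ∘ Equiv.Perm.decomposeFin.symm (k.succ, q)) l.succ)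
          = (h k) ∘ q := by
        funext l
        simp only [Function.comp_apply, Equiv.Perm.decomposeFin_symm_apply_succ, hdef]
        by_cases hc : q l = k
        · rw [hc, Equiv.swap_apply_right, if_pos rfl]
        · rw [Equiv.swap_apply_of_ne_of_ne (Fin.succ_ne_zero _)
            (by simpa using hc), if_neg hc]
      rw [harg]
      simp only [Function.comp_apply, Equiv.Perm.decomposeFin_symm_apply_zero,
        Equiv.Perm.decomposeFin.symm_sign, if_neg (Fin.succ_ne_zero k)]
      push_cast
      rw [neg_one_mul, neg_mul, keyT _ q _]
    rw [Finset.sum_congr rfl (fun q _ => t0 q)]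
    rw [Finset.sum_congr rfl
      (fun k _ => Finset.sum_congr rfl (fun q _ => tk k q))]
    simp only [Finset.sum_const, Finset.card_univ,
      Fintype.card_perm, Fintype.card_fin, nsmul_eq_mul, mul_neg]
    rw [Finset.sum_neg_distrib, ← Finset.mul_sum]
    ring
  -- RHS sum computation
  have hsum2 : ∑ r : Equiv.Perm (Fin (2 * i)),
      ((Equiv.Perm.sign r : ℤ) : ℝ)
        * T (((fun l => μ l.succ) ∘ r) z)
          (Function.update ((fun l => μ l.succ) ∘ r) z (μ 0))
      = ∑ r : Equiv.Perm (Fin (2 * i)), T (μ (r z).succ) (h (r z)) := by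
    refine Finset.sum_congr rfl fun r _ => ?_
    have harg : Function.update ((fun l => μ l.succ) ∘ r) z (μ 0) = h (r z) ∘ r := by
      funext l
      by_cases hc : l = z
      · subst hc
        simp [hdef]
      · rw [Function.update_of_ne hc]
        simp only [Function.comp_apply, hdef]
        rw [if_neg (fun hh => hc (r.injective hh))]
    rw [harg]
    simp only [Function.comp_apply]
    exact keyT _ r _
  have hperm := sum_perm_apply hn0 (fun k => T (μ k.succ) (h k)) z
  push_cast at hperm
  -- unfold `alt` on both sides by definitional equality
  have L : (2 * i + 1 : ℝ)
      * alt (2 * i + 1) D (fun ν => T (ν 0) (fun l => ν l.succ)) μ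
      = (2 * i + 1 : ℝ) * ((1 / (Nat.factorial (2 * i + 1)) : ℝ)
        * ∑ p : Equiv.Perm (Fin (2 * i + 1)),
            ((Equiv.Perm.sign p : ℤ) : ℝ) * T ((μ ∘ p) 0) (fun l => (μ ∘ p) l.succ)) := rfl
  have R : (2 * i : ℝ)
      * alt (2 * i) D
          (fun ν => T (ν ⟨0, by omega⟩)
            (Function.update ν (⟨0, by omega⟩ : Fin (2 * i)) (μ 0)))
          (fun l => μ l.succ)
      = (2 * i : ℝ) * ((1 / (Nat.factorial (2 * i)) : ℝ)
        * ∑ r : Equiv.Perm (Fin (2 * i)),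
            ((Equiv.Perm.sign r : ℤ) : ℝ)
              * T (((fun l => μ l.succ) ∘ r) z)
                (Function.update ((fun l => μ l.succ) ∘ r) z (μ 0))) := rfl
  rw [L, R, hsum, hsum2]
  have hfne : ((Nat.factorial (2 * i) : ℝ)) ≠ 0 := by
    exact_mod_cast (Nat.factorial_pos (2 * i)).ne'
  have hfac : ((Nat.factorial (2 * i + 1) : ℝ))
      = (2 * i + 1 : ℝ) * (Nat.factorial (2 * i) : ℝ) := by
    rw [Nat.factorial_succ]
    push_cast
    ring
  have e2 : (2 * i : ℝ) * ((1 / (Nat.factorial (2 * i)) : ℝ)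
      * ∑ r : Equiv.Perm (Fin (2 * i)), T (μ (r z).succ) (h (r z)))
      = ∑ k : Fin (2 * i), T (μ k.succ) (h k) := by
    rw [show (2 * i : ℝ) * ((1 / (Nat.factorial (2 * i)) : ℝ)
        * ∑ r : Equiv.Perm (Fin (2 * i)), T (μ (r z).succ) (h (r z)))
        = ((2 * i : ℝ) * ∑ r : Equiv.Perm (Fin (2 * i)),
            T (μ (r z).succ) (h (r z))) / (Nat.factorial (2 * i) : ℝ)
      by push_cast; ring, hperm]
    field_simp
  rw [e2, hfac]
  field_simp
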